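/- The minimum cardinality of a maximal independent set of the clutter C_k(Γ_n) of the n-cycle equals ⌈(k−1)n/(k+1)⌉, where C_k(Γ_n) is the clutter on the n vertices of the cycle Γ_n whose edges are the k-element subsets inducing a connected subgraph (i.e., k consecutive vertices), assuming 2 ≤ k and n ≥ k+1. -/
import Mathlib

/-- The edges of the clutter `C_k(Γ_n)` of the `n`-cycle: sets of `k` cyclically consecutive
vertices. -/
def CycleEdge (n k : ℕ) (A : Finset (ZMod n)) : Prop :=
  ∃ a : ZMod n, A = (Finset.range k).image (fun j : ℕ => a + (j : ZMod n))

namespace CP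
open Finset

variable {n : ℕ}

lemma cast_inj_lt [NeZero n] {x y : ℕ} (hx : x < n) (hy : y < n)
    (h : (x : ZMod n) = (y : ZMod n)) : x = y := by
  have h2 := congrArg ZMod.val h
  rwa [ZMod.val_cast_of_lt hx, ZMod.val_cast_of_lt hy] at h2

lemma val_add_nat [NeZero n] (a : ZMod n) (j : ℕ) :
    (a + (j : ZMod n)).val = (a.val + j) % n := by
  rw [ZMod.val_add, ZMod.val_natCast]
  conv_rhs => rw [Nat.add_mod]
  rw [Nat.mod_eq_of_lt (ZMod.val_lt a)]

lemma blk {m i j c d : ℕ} (hc : c < m) (hd : d < m) (h : m*i + c = m*j + d) :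
    i = j ∧ c = d := by
  have h1 : (m*i + c) % m = c := by rw [Nat.mul_add_mod, Nat.mod_eq_of_lt hc]
  have h2 : (m*j + d) % m = d := by rw [Nat.mul_add_mod, Nat.mod_eq_of_lt hd]
  have hcd : c = d := by rw [← h1, ← h2, h]
  subst hcd
  refine ⟨?_, rfl⟩
  have h3 : m * i = m * j := by omega
  exact Nat.eq_of_mul_eq_mul_left (by omega) h3

lemma build {k : ℕ} (hn : 0 < n) (hkn : k < n) (S : Finset ℕ) (hS : ∀ x ∈ S, x < n)
    (hind : ∀ t, t < n → ∃ j, j < k ∧ (t + j) % n ∈ S)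
    (hmax : ∀ t ∈ S, ∃ c j0, j0 < k ∧ (c + j0) % n = t ∧
      ∀ j, j < k → j ≠ j0 → (c + j) % n ∉ S) :
    ∃ A : Finset (ZMod n),
      (∀ e, CycleEdge n k e → ¬ e ⊆ A) ∧
      (∀ B : Finset (ZMod n), (∀ e, CycleEdge n k e → ¬ e ⊆ B) → A ⊆ B → B = A) ∧
      A.card + S.card = n := by
  haveI : NeZero n := ⟨hn.ne'⟩
  classical
  refine ⟨Finset.univ.filter (fun v : ZMod n => ¬ (v.val ∈ S)), ?_, ?_, ?_⟩
  · rintro e ⟨a, rfl⟩ hsub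
    obtain ⟨j, hj, hjS⟩ := hind a.val (ZMod.val_lt a)
    have hmem : a + (j : ZMod n) ∈ (range k).image (fun j : ℕ => a + (j : ZMod n)) :=
      mem_image.mpr ⟨j, mem_range.mpr hj, rfl⟩
    have h2 := hsub hmem
    rw [mem_filter] at h2
    exact h2.2 (by rwa [val_add_nat])
  · intro B hBind hAB
    refine Finset.Subset.antisymm ?_ hAB
    intro v hvB
    by_contra hvA
    have hvS : v.val ∈ S := by
      by_contra h; exact hvA (mem_filter.mpr ⟨mem_univ _, h⟩)
    obtain ⟨c, j0, hj0, hcj0, hrest⟩ := hmax v.val hvS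
    refine hBind _ ⟨(c : ZMod n), rfl⟩ ?_
    intro x hx
    obtain ⟨j, hjr, rfl⟩ := mem_image.mp hx
    rw [mem_range] at hjr
    have hval : ((c : ZMod n) + (j : ZMod n)).val = (c + j) % n := by
      rw [val_add_nat, ZMod.val_natCast, Nat.mod_add_mod]
    by_cases hje : j = j0
    · subst hje
      have hxv : ((c : ZMod n) + (j : ZMod n)) = v :=
        ZMod.val_injective n (by rw [hval, hcj0])
      rwa [hxv]
    · exact hAB (mem_filter.mpr ⟨mem_univ _, by rw [hval]; exact hrest j hjr hje⟩)
  · have hcount := Finset.card_filter_add_card_filter_not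
      (s := (univ : Finset (ZMod n))) (p := fun v : ZMod n => v.val ∈ S)
    have himg : Finset.univ.filter (fun v : ZMod n => v.val ∈ S)
        = S.image (fun x : ℕ => (x : ZMod n)) := by
      ext v
      simp only [mem_filter, mem_univ, true_and, mem_image]
      constructor
      · intro h; exact ⟨v.val, h, ZMod.natCast_rightInverse v⟩
      · rintro ⟨x, hxS, rfl⟩; rwa [ZMod.val_cast_of_lt (hS x hxS)]
    have hinj : Set.InjOn (fun x : ℕ => (x : ZMod n)) S :=
      fun x hx y hy h => cast_inj_lt (hS x hx) (hS y hy) h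
    rw [himg, Finset.card_image_of_injOn hinj] at hcount
    have huniv : (univ : Finset (ZMod n)).card = n := by
      rw [Finset.card_univ, ZMod.card]
    omega

lemma lower {k : ℕ} (hk : 2 ≤ k) (hn : k + 1 ≤ n) (A : Finset (ZMod n))
    (hind : ∀ e, CycleEdge n k e → ¬ e ⊆ A)
    (hmax : ∀ B : Finset (ZMod n), (∀ e, CycleEdge n k e → ¬ e ⊆ B) → A ⊆ B → B = A) :
    ((k - 1) * n + k) / (k + 1) ≤ A.card := by
  haveI : NeZero n := ⟨by omega⟩
  classical
  -- maximality consequence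
  have hT3 : ∀ v : ZMod n, v ∉ A → ∃ a : ZMod n,
      (∃ i, i < k ∧ v = a + (i : ZMod n)) ∧
      (∀ j, j < k → a + (j : ZMod n) ≠ v → a + (j : ZMod n) ∈ A) := by
    intro v hv
    have hBne : ¬ (∀ e, CycleEdge n k e → ¬ e ⊆ insert v A) := by
      intro h
      have h2 := hmax (insert v A) h (Finset.subset_insert v A)
      rw [← h2] at hv
      exact hv (Finset.mem_insert_self v A)
    push_neg at hBne
    obtain ⟨e, ⟨a, rfl⟩, hsub⟩ := hBne
    have hvmem : v ∈ (range k).image (fun j : ℕ => a + (j : ZMod n)) := by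
      by_contra hvm
      refine hind _ ⟨a, rfl⟩ (fun x hx => ?_)
      rcases Finset.mem_insert.mp (hsub hx) with h | h
      · exact absurd (h ▸ hx) hvm
      · exact h
    obtain ⟨i, hi, hiv⟩ := mem_image.mp hvmem
    refine ⟨a, ⟨i, mem_range.mp hi, hiv.symm⟩, fun j hj hne => ?_⟩
    have h3 : a + (j : ZMod n) ∈ insert v A := hsub (mem_image.mpr ⟨j, mem_range.mpr hj, rfl⟩)
    rcases Finset.mem_insert.mp h3 with h | h
    · exact absurd h hne
    · exact h
  have key3 : ∀ (a : ZMod n) (j1 j2 j3 : ℕ), j1 < j2 → j2 < j3 → j3 ≤ k →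
      a + (j1 : ZMod n) ∉ A → a + (j2 : ZMod n) ∉ A → a + (j3 : ZMod n) ∉ A → False := by
    intro a j1 j2 j3 h12 h23 h3k h1 h2 h3
    obtain ⟨c, ⟨i, hik, hvi⟩, hrest⟩ := hT3 _ h2
    rcases le_or_gt (j2 - j1) i with hcase | hcase
    · set j' := i - (j2 - j1) with hj'def
      have hj' : j' < k := by omega
      have hc : ((j' : ℕ) : ZMod n) + (j2 : ZMod n) = (i : ZMod n) + (j1 : ZMod n) := by
        have hn1 : (j' + j2 : ℕ) = i + j1 := by omega
        exact_mod_cast congrArg (fun x : ℕ => (x : ZMod n)) hn1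
      have heq : c + (j' : ZMod n) = a + (j1 : ZMod n) := by linear_combination hc - hvi
      have hne : c + (j' : ZMod n) ≠ a + (j2 : ZMod n) := by
        rw [heq]
        intro h
        have h4 : (j1 : ZMod n) = (j2 : ZMod n) := add_left_cancel h
        have := cast_inj_lt (x := j1) (y := j2) (by omega) (by omega) h4
        omega
      have hA := hrest j' hj' hne
      rw [heq] at hA
      exact h1 hA
    · set j' := i + (j3 - j2) with hj'def
      have hj' : j' < k := by omega
      have hc : ((j' : ℕ) : ZMod n) + (j2 : ZMod n) = (i : ZMod n) + (j3 : ZMod n) := by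
        have hn1 : (j' + j2 : ℕ) = i + j3 := by omega
        exact_mod_cast congrArg (fun x : ℕ => (x : ZMod n)) hn1
      have heq : c + (j' : ZMod n) = a + (j3 : ZMod n) := by linear_combination hc - hvi
      have hne : c + (j' : ZMod n) ≠ a + (j2 : ZMod n) := by
        rw [heq]
        intro h
        have h4 : (j3 : ZMod n) = (j2 : ZMod n) := add_left_cancel h
        have := cast_inj_lt (x := j3) (y := j2) (by omega) (by omega) h4
        omega
      have hA := hrest j' hj' hne
      rw [heq] at hA
      exact h3 hA
  -- each (k+1)-window contains at most 2 elements of the complement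
  have hcap : ∀ a : ZMod n,
      (((range (k+1)).image (fun j : ℕ => a + (j : ZMod n))) ∩ Aᶜ).card ≤ 2 := by
    intro a
    by_contra hlt
    push_neg at hlt
    obtain ⟨x, y, z, hx, hy, hz, hxy, hxz, hyz⟩ := Finset.two_lt_card_iff.mp hlt
    obtain ⟨jx, hjx, hjx2⟩ := mem_image.mp (Finset.mem_of_mem_inter_left hx)
    obtain ⟨jy, hjy, hjy2⟩ := mem_image.mp (Finset.mem_of_mem_inter_left hy)
    obtain ⟨jz, hjz, hjz2⟩ := mem_image.mp (Finset.mem_of_mem_inter_left hz)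
    rw [mem_range] at hjx hjy hjz
    have hxA : a + (jx : ZMod n) ∉ A := by
      rw [hjx2]; exact Finset.mem_compl.mp (Finset.mem_of_mem_inter_right hx)
    have hyA : a + (jy : ZMod n) ∉ A := by
      rw [hjy2]; exact Finset.mem_compl.mp (Finset.mem_of_mem_inter_right hy)
    have hzA : a + (jz : ZMod n) ∉ A := by
      rw [hjz2]; exact Finset.mem_compl.mp (Finset.mem_of_mem_inter_right hz)
    have hne1 : jx ≠ jy := fun h => hxy (by rw [← hjx2, ← hjy2, h])
    have hne2 : jx ≠ jz := fun h => hxz (by rw [← hjx2, ← hjz2, h])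
    have hne3 : jy ≠ jz := fun h => hyz (by rw [← hjy2, ← hjz2, h])
    have happ : ∀ b c d : ℕ, b < c → c < d → d < k+1 →
        a + (b : ZMod n) ∉ A → a + (c : ZMod n) ∉ A → a + (d : ZMod n) ∉ A → False :=
      fun b c d hbc hcd hdk => key3 a b c d hbc hcd (by omega)
    rcases Nat.lt_trichotomy jx jy with h1 | h1 | h1
    · rcases Nat.lt_trichotomy jy jz with h2 | h2 | h2
      · exact happ jx jy jz h1 h2 hjz hxA hyA hzA
      · exact absurd h2 hne3
      · rcases Nat.lt_trichotomy jx jz with h3 | h3 | h3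
        · exact happ jx jz jy h3 h2 hjy hxA hzA hyA
        · exact absurd h3 hne2
        · exact happ jz jx jy h3 h1 hjy hzA hxA hyA
    · exact absurd h1 hne1
    · rcases Nat.lt_trichotomy jx jz with h2 | h2 | h2
      · exact happ jy jx jz h1 h2 hjz hyA hxA hzA
      · exact absurd h2 hne2
      · rcases Nat.lt_trichotomy jy jz with h3 | h3 | h3
        · exact happ jy jz jx h3 h2 hjx hyA hzA hxA
        · exact absurd h3 hne3
        · exact happ jz jy jx h3 h1 hjx hzA hyA hxA
  -- double counting
  have hwin : ∀ v : ZMod n,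
      (univ.filter (fun a : ZMod n => v ∈ (range (k+1)).image (fun j : ℕ => a + (j : ZMod n)))).card
        = k + 1 := by
    intro v
    have himg : univ.filter (fun a : ZMod n => v ∈ (range (k+1)).image (fun j : ℕ => a + (j : ZMod n)))
        = (range (k+1)).image (fun j : ℕ => v - (j : ZMod n)) := by
      ext b
      simp only [mem_filter, mem_univ, true_and, mem_image, mem_range]
      constructor
      · rintro ⟨j, hj, hbj⟩
        exact ⟨j, hj, by rw [← hbj]; ring⟩
      · rintro ⟨j, hj, rfl⟩
        exact ⟨j, hj, by ring⟩
    rw [himg, Finset.card_image_of_injOn, card_range]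
    intro x hx y hy h
    rw [mem_coe, mem_range] at hx hy
    have h2 : (x : ZMod n) = (y : ZMod n) := by
      have := sub_right_injective h
      exact this
    exact cast_inj_lt (by omega) (by omega) h2
  have hsum : ∑ a : ZMod n,
      (((range (k+1)).image (fun j : ℕ => a + (j : ZMod n))) ∩ Aᶜ).card
      = Aᶜ.card * (k+1) := by
    have step1 : ∀ a : ZMod n,
        (((range (k+1)).image (fun j : ℕ => a + (j : ZMod n))) ∩ Aᶜ)
        = Aᶜ.filter (fun v => v ∈ (range (k+1)).image (fun j : ℕ => a + (j : ZMod n))) := by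
      intro a; ext v
      simp only [Finset.mem_inter, Finset.mem_filter]
      exact and_comm
    calc ∑ a : ZMod n, (((range (k+1)).image (fun j : ℕ => a + (j : ZMod n))) ∩ Aᶜ).card
        = ∑ a : ZMod n, ∑ v ∈ Aᶜ,
            (if v ∈ (range (k+1)).image (fun j : ℕ => a + (j : ZMod n)) then 1 else 0) := by
          refine Finset.sum_congr rfl (fun a _ => ?_)
          rw [step1 a, Finset.card_filter]
      _ = ∑ v ∈ Aᶜ, ∑ a : ZMod n,
            (if v ∈ (range (k+1)).image (fun j : ℕ => a + (j : ZMod n)) then 1 else 0) :=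
          Finset.sum_comm
      _ = ∑ v ∈ Aᶜ, (k+1) := by
          refine Finset.sum_congr rfl (fun v _ => ?_)
          rw [← Finset.card_filter]
          exact hwin v
      _ = Aᶜ.card * (k+1) := by rw [Finset.sum_const, smul_eq_mul]
  have hbound : Aᶜ.card * (k+1) ≤ n * 2 := by
    rw [← hsum]
    calc ∑ a : ZMod n, (((range (k+1)).image (fun j : ℕ => a + (j : ZMod n))) ∩ Aᶜ).card
        ≤ ∑ _a : ZMod n, 2 := Finset.sum_le_sum (fun a _ => hcap a)
      _ = n * 2 := by rw [Finset.sum_const, smul_eq_mul, Finset.card_univ, ZMod.card]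
  have hpart : A.card + Aᶜ.card = n := by
    rw [Finset.card_add_card_compl, ZMod.card]
  obtain ⟨k', rfl⟩ : ∃ k', k = k' + 2 := ⟨k - 2, by omega⟩
  rw [Nat.div_le_iff_le_mul_add_pred (by omega : 0 < k' + 2 + 1)]
  set x := A.card
  set y := Aᶜ.card
  rw [← hpart] at hbound ⊢
  have hb2 : (k'+3) * y ≤ 2*x + 2*y := by
    have e1 : y * (k'+2+1) = (k'+3)*y := by ring
    have e2 : (x+y)*2 = 2*x+2*y := by ring
    omega
  have hb3 : (k'+1)*y ≤ 2*x := by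
    have e3 : (k'+3)*y = (k'+1)*y + 2*y := by ring
    omega
  have hgl : (k'+1)*(x+y) ≤ (k'+3)*x := by
    have e5 : (k'+1)*(x+y) = (k'+1)*x + (k'+1)*y := by ring
    have e6 : (k'+3)*x = (k'+1)*x + 2*x := by ring
    omega
  have e7 : (k'+2-1) * (x+y) = (k'+1)*(x+y) := by
    congr 1
  have e8 : (k'+2+1)*x = (k'+3)*x := by ring
  omega

lemma caseA (k' p r : ℕ) (hr : 2*r ≤ k'+2) :
    ∃ S : Finset ℕ, S.card = 2*p+2 ∧ (∀ x ∈ S, x < (k'+3)*(p+1)+r) ∧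
      (∀ t, t < (k'+3)*(p+1)+r → ∃ j, j < k'+2 ∧ (t + j) % ((k'+3)*(p+1)+r) ∈ S) ∧
      (∀ t ∈ S, ∃ c j0, j0 < k'+2 ∧ (c + j0) % ((k'+3)*(p+1)+r) = t ∧
        ∀ j, j < k'+2 → j ≠ j0 → (c + j) % ((k'+3)*(p+1)+r) ∉ S) := by
  set m := k'+3 with hmdef
  set n := m*(p+1)+r with hndef
  have f1 : m*(p+1) = m*p + m := by ring
  have hm0 : 0 < m := by omega
  set S : Finset ℕ := ((range (p+1)).image (fun i => m*i))
      ∪ ((range p).image (fun i => m*i + 1)) ∪ {m*p + 1 + r} with hSdef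
  have hmem : ∀ t, t ∈ S ↔ ((∃ i, i ≤ p ∧ m*i = t) ∨ (∃ i, i < p ∧ m*i + 1 = t)
      ∨ t = m*p + 1 + r) := by
    intro t
    simp only [hSdef, mem_union, mem_image, mem_range, mem_singleton]
    constructor
    · rintro ((⟨i, hi, h⟩ | ⟨i, hi, h⟩) | h)
      exacts [Or.inl ⟨i, by omega, h⟩, Or.inr (Or.inl ⟨i, hi, h⟩), Or.inr (Or.inr h)]
    · rintro (⟨i, hi, h⟩ | ⟨i, hi, h⟩ | h)
      exacts [Or.inl (Or.inl ⟨i, by omega, h⟩), Or.inl (Or.inr ⟨i, hi, h⟩), Or.inr h]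
  have hbnd : ∀ x ∈ S, x < n := by
    intro x hx
    rw [hmem] at hx
    rcases hx with ⟨i, hi, h⟩ | ⟨i, hi, h⟩ | h
    · have := Nat.mul_le_mul_left m hi
      omega
    · have := Nat.mul_le_mul_left m (le_of_lt hi)
      omega
    · omega
  refine ⟨S, ?_, hbnd, ?_, ?_⟩
  · -- cardinality
    have hinj1 : Function.Injective (fun i => m*i) :=
      fun a b h => Nat.eq_of_mul_eq_mul_left hm0 h
    have hinj2 : Function.Injective (fun i => m*i + 1) := by
      intro a b h
      simp only [add_left_inj] at h
      exact Nat.eq_of_mul_eq_mul_left hm0 h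
    have hd12 : Disjoint ((range (p+1)).image (fun i => m*i))
        ((range p).image (fun i => m*i + 1)) := by
      rw [Finset.disjoint_left]
      rintro x hx1 hx2
      obtain ⟨i, hi, h1⟩ := mem_image.mp hx1
      obtain ⟨j, hj, h2⟩ := mem_image.mp hx2
      have h3 : m*i + 0 = m*j + 1 := by omega
      have := (blk (by omega) (by omega) h3).2
      omega
    have hd3 : Disjoint (((range (p+1)).image (fun i => m*i))
        ∪ ((range p).image (fun i => m*i + 1))) ({m*p + 1 + r} : Finset ℕ) := by
      rw [Finset.disjoint_right]
      intro x hx1 hx2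
      rw [mem_singleton] at hx1
      rcases mem_union.mp hx2 with h | h
      · obtain ⟨i, hi, h1⟩ := mem_image.mp h
        have h3 : m*i + 0 = m*p + (1+r) := by omega
        have := (blk (by omega) (by omega) h3).2
        omega
      · obtain ⟨i, hi, h1⟩ := mem_image.mp h
        rw [mem_range] at hi
        have h3 : m*i + 1 = m*p + (1+r) := by omega
        have h4 := blk (by omega) (by omega) h3
        omega
    rw [hSdef, Finset.card_union_of_disjoint hd3, Finset.card_union_of_disjoint hd12,
      Finset.card_image_of_injective _ hinj1, Finset.card_image_of_injective _ hinj2,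
      card_range, card_range, card_singleton]
    omega
  · -- independence pattern
    intro t ht
    obtain ⟨i, s, hdm, hs⟩ : ∃ i s, t = m*i + s ∧ s < m :=
      ⟨t/m, t%m, (Nat.div_add_mod t m).symm, Nat.mod_lt _ (by omega)⟩
    have hip : i ≤ p+1 := by
      by_contra hcon
      push_neg at hcon
      have h2 : m*(p+2) ≤ m*i := Nat.mul_le_mul_left m hcon
      have h3 : m*(p+2) = m*p + m + m := by ring
      omega
    by_cases hi1 : i < p
    · have hle : m*(i+1) ≤ m*p := Nat.mul_le_mul_left m (by omega)
      have hsucc : m*(i+1) = m*i + m := by ring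
      rcases Nat.lt_or_ge s 2 with hs2 | hs2
      · refine ⟨0, by omega, ?_⟩
        rw [Nat.mod_eq_of_lt (by omega)]
        rw [hmem]
        rcases Nat.lt_or_ge s 1 with hs1 | hs1
        · exact Or.inl ⟨i, by omega, by omega⟩
        · exact Or.inr (Or.inl ⟨i, hi1, by omega⟩)
      · refine ⟨m - s, by omega, ?_⟩
        rw [Nat.mod_eq_of_lt (by omega)]
        rw [hmem]
        exact Or.inl ⟨i+1, by omega, by omega⟩
    · rcases Nat.lt_or_ge i (p+1) with hi2 | hi2
      · -- i = p
        have hieq : i = p := by omega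
        subst hieq
        rcases Nat.lt_or_ge s 1 with hs1 | hs1
        · exact ⟨0, by omega, by
            rw [Nat.mod_eq_of_lt (by omega), hmem]
            exact Or.inl ⟨i, le_refl i, by omega⟩⟩
        · rcases Nat.lt_or_ge s (2+r) with hs2 | hs2
          · refine ⟨1 + r - s, by omega, ?_⟩
            rw [Nat.mod_eq_of_lt (by omega), hmem]
            exact Or.inr (Or.inr (by omega))
          · refine ⟨m + r - s, by omega, ?_⟩
            have h4 : t + (m + r - s) = n := by omega
            rw [h4, Nat.mod_self, hmem]
            refine Or.inl ⟨0, by omega, ?_⟩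
            have : m * 0 = 0 := by ring
            omega
      · -- i = p+1
        have hieq : i = p+1 := by omega
        subst hieq
        have hsr : s < r := by omega
        refine ⟨r - s, by omega, ?_⟩
        have h4 : t + (r - s) = n := by omega
        rw [h4, Nat.mod_self, hmem]
        refine Or.inl ⟨0, by omega, ?_⟩
        have : m * 0 = 0 := by ring
        omega
  · -- maximality pattern
    intro t ht
    have htn : t < n := hbnd t ht
    rw [hmem] at ht
    rcases ht with ⟨i, hi, hieq⟩ | ⟨i, hi, hieq⟩ | hieq
    · -- t = m*i
      rcases i with _ | i'
      · -- i = 0, t = 0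
        have ht0 : t = 0 := by
          have : m * 0 = 0 := by ring
          omega
        refine ⟨m*p + r + 2, k'+1, by omega, ?_, ?_⟩
        · have h4 : m*p + r + 2 + (k'+1) = n := by omega
          rw [h4, Nat.mod_self]
          omega
        · intro j hj hne
          have h5 : m*p + r + 2 + j < n := by omega
          rw [Nat.mod_eq_of_lt h5, hmem]
          push_neg
          refine ⟨?_, ?_, by omega⟩
          · rintro i2 hi2
            have := Nat.mul_le_mul_left m hi2
            omega
          · rintro i2 hi2
            have := Nat.mul_le_mul_left m (le_of_lt hi2)
            omega
      · -- t = m*(i'+1)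
        have hsucc : m*(i'+1) = m*i' + m := by ring
        have hle : m*(i'+1) ≤ m*p := Nat.mul_le_mul_left m hi
        refine ⟨m*i' + 2, k'+1, by omega, ?_, ?_⟩
        · rw [Nat.mod_eq_of_lt (by omega)]
          omega
        · intro j hj hne
          rw [Nat.mod_eq_of_lt (by omega), hmem]
          push_neg
          refine ⟨?_, ?_, ?_⟩
          · rintro i2 hi2 hcon
            have h3 : m*i2 + 0 = m*i' + (2+j) := by omega
            have := (blk (by omega) (by omega) h3).2
            omega
          · rintro i2 hi2 hcon
            have h3 : m*i2 + 1 = m*i' + (2+j) := by omega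
            have := (blk (by omega) (by omega) h3).2
            omega
          · intro hcon
            have h3 : m*i' + (2+j) = m*p + (1+r) := by omega
            have h4 := blk (by omega) (by omega) h3
            omega
    · -- t = m*i + 1, i < p
      have hle : m*(i+1) ≤ m*p := Nat.mul_le_mul_left m hi
      have hsucc : m*(i+1) = m*i + m := by ring
      refine ⟨t, 0, by omega, by rw [Nat.add_zero]; exact Nat.mod_eq_of_lt htn, ?_⟩
      intro j hj hne
      rw [Nat.mod_eq_of_lt (by omega), hmem]
      push_neg
      refine ⟨?_, ?_, ?_⟩
      · rintro i2 hi2 hcon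
        have h3 : m*i2 + 0 = m*i + (1+j) := by omega
        have := (blk (by omega) (by omega) h3).2
        omega
      · rintro i2 hi2 hcon
        have h3 : m*i2 + 1 = m*i + (1+j) := by omega
        have := (blk (by omega) (by omega) h3).2
        omega
      · intro hcon
        have h3 : m*i + (1+j) = m*p + (1+r) := by omega
        have h4 := blk (by omega) (by omega) h3
        omega
    · -- t = m*p + 1 + r
      refine ⟨t, 0, by omega, by rw [Nat.add_zero]; exact Nat.mod_eq_of_lt htn, ?_⟩
      intro j hj hne
      rw [Nat.mod_eq_of_lt (by omega), hmem]
      push_neg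
      refine ⟨?_, ?_, by omega⟩
      · rintro i2 hi2
        have := Nat.mul_le_mul_left m hi2
        omega
      · rintro i2 hi2
        have := Nat.mul_le_mul_left m (le_of_lt hi2)
        omega
lemma caseB (k' p r : ℕ) (hr : k'+3 ≤ 2*r) (hrm : r < k'+3) :
    ∃ S : Finset ℕ, S.card = 2*p+3 ∧ (∀ x ∈ S, x < (k'+3)*(p+1)+r) ∧
      (∀ t, t < (k'+3)*(p+1)+r → ∃ j, j < k'+2 ∧ (t + j) % ((k'+3)*(p+1)+r) ∈ S) ∧
      (∀ t ∈ S, ∃ c j0, j0 < k'+2 ∧ (c + j0) % ((k'+3)*(p+1)+r) = t ∧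
        ∀ j, j < k'+2 → j ≠ j0 → (c + j) % ((k'+3)*(p+1)+r) ∉ S) := by
  set m := k'+3 with hmdef
  set n := m*(p+1)+r with hndef
  have f1 : m*(p+1) = m*p + m := by ring
  have hm0 : 0 < m := by omega
  obtain ⟨a, b, hab, hb⟩ : ∃ a b, k'+1 = 2*a + b ∧ b < 2 :=
    ⟨(k'+1)/2, (k'+1)%2, (Nat.div_add_mod (k'+1) 2).symm, Nat.mod_lt _ (by omega)⟩
  -- key numeric facts
  have hra : a + b + 1 ≤ r := by omega
  have ham : a + 2 ≤ m := by omega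
  set S : Finset ℕ := ((range (p+2)).image (fun i => m*i))
      ∪ ((range (p+1)).image (fun i => m*i + (a+1))) with hSdef
  have hmem : ∀ t, t ∈ S ↔ ((∃ i, i ≤ p+1 ∧ m*i = t) ∨ (∃ i, i ≤ p ∧ m*i + (a+1) = t)) := by
    intro t
    simp only [hSdef, mem_union, mem_image, mem_range]
    constructor
    · rintro (⟨i, hi, h⟩ | ⟨i, hi, h⟩)
      exacts [Or.inl ⟨i, by omega, h⟩, Or.inr ⟨i, by omega, h⟩]
    · rintro (⟨i, hi, h⟩ | ⟨i, hi, h⟩)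
      exacts [Or.inl ⟨i, by omega, h⟩, Or.inr ⟨i, by omega, h⟩]
  have hbnd : ∀ x ∈ S, x < n := by
    intro x hx
    rw [hmem] at hx
    rcases hx with ⟨i, hi, h⟩ | ⟨i, hi, h⟩
    · have := Nat.mul_le_mul_left m hi
      omega
    · have := Nat.mul_le_mul_left m hi
      omega
  refine ⟨S, ?_, hbnd, ?_, ?_⟩
  · -- cardinality
    have hinj1 : Function.Injective (fun i => m*i) :=
      fun x y h => Nat.eq_of_mul_eq_mul_left hm0 h
    have hinj2 : Function.Injective (fun i => m*i + (a+1)) := by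
      intro x y h
      simp only [add_left_inj] at h
      exact Nat.eq_of_mul_eq_mul_left hm0 h
    have hd12 : Disjoint ((range (p+2)).image (fun i => m*i))
        ((range (p+1)).image (fun i => m*i + (a+1))) := by
      rw [Finset.disjoint_left]
      rintro x hx1 hx2
      obtain ⟨i, hi, h1⟩ := mem_image.mp hx1
      obtain ⟨j, hj, h2⟩ := mem_image.mp hx2
      have h3 : m*i + 0 = m*j + (a+1) := by omega
      have := (blk (by omega) (by omega) h3).2
      omega
    rw [hSdef, Finset.card_union_of_disjoint hd12,
      Finset.card_image_of_injective _ hinj1, Finset.card_image_of_injective _ hinj2,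
      card_range, card_range]
    omega
  · -- independence pattern
    intro t ht
    obtain ⟨i, s, hdm, hs⟩ : ∃ i s, t = m*i + s ∧ s < m :=
      ⟨t/m, t%m, (Nat.div_add_mod t m).symm, Nat.mod_lt _ (by omega)⟩
    have hip : i ≤ p+1 := by
      by_contra hcon
      push_neg at hcon
      have h2 : m*(p+2) ≤ m*i := Nat.mul_le_mul_left m hcon
      have h3 : m*(p+2) = m*p + m + m := by ring
      omega
    rcases Nat.lt_or_ge i (p+1) with hi1 | hi1
    · -- i ≤ p
      have hle : m*(i+1) ≤ m*(p+1) := Nat.mul_le_mul_left m (by omega)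
      have hsucc : m*(i+1) = m*i + m := by ring
      rcases Nat.lt_or_ge s 1 with hs1 | hs1
      · exact ⟨0, by omega, by
          rw [Nat.mod_eq_of_lt (by omega), hmem]
          exact Or.inl ⟨i, by omega, by omega⟩⟩
      · rcases Nat.lt_or_ge s (a+2) with hs2 | hs2
        · refine ⟨a+1-s, by omega, ?_⟩
          rw [Nat.mod_eq_of_lt (by omega), hmem]
          exact Or.inr ⟨i, by omega, by omega⟩
        · refine ⟨m-s, by omega, ?_⟩
          rw [Nat.mod_eq_of_lt (by omega), hmem]
          exact Or.inl ⟨i+1, by omega, by omega⟩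
    · -- i = p+1
      have hieq : i = p+1 := by omega
      subst hieq
      have hsr : s < r := by omega
      rcases Nat.lt_or_ge s 1 with hs1 | hs1
      · exact ⟨0, by omega, by
          rw [Nat.mod_eq_of_lt (by omega), hmem]
          exact Or.inl ⟨p+1, le_refl _, by omega⟩⟩
      · refine ⟨r-s, by omega, ?_⟩
        have h4 : t + (r-s) = n := by omega
        rw [h4, Nat.mod_self, hmem]
        refine Or.inl ⟨0, by omega, ?_⟩
        have : m*0 = 0 := by ring
        omega
  · -- maximality pattern
    intro t ht
    have htn : t < n := hbnd t ht
    rw [hmem] at ht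
    rcases ht with ⟨i, hi, hieq⟩ | ⟨i, hi, hieq⟩
    · rcases i with _ | i2
      · -- t = 0
        have ht0 : t = 0 := by
          have : m*0 = 0 := by ring
          omega
        refine ⟨m*p + (r+a+2), k'+1-a, by omega, ?_, ?_⟩
        · have h4 : m*p + (r+a+2) + (k'+1-a) = n := by omega
          rw [h4, Nat.mod_self]
          omega
        · intro j hj hne
          rcases Nat.lt_or_ge j (k'+1-a) with hjlt | hjgt
          · -- no wrap
            have h5 : m*p + (r+a+2) + j < n := by omega
            rw [Nat.mod_eq_of_lt h5, hmem]
            push_neg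
            set o := r+a+2+j with hodef
            have hsplit : m*p + (r+a+2) + j = m*p + o := by omega
            rw [hsplit]
            rcases Nat.lt_or_ge o m with hom | hom
            · constructor
              · rintro i3 hi3 hcon
                have h3 : m*i3 + 0 = m*p + o := by omega
                have := (blk (by omega) (by omega) h3).2
                omega
              · rintro i3 hi3 hcon
                have h3 : m*i3 + (a+1) = m*p + o := by omega
                have := (blk (by omega) (by omega) h3).2
                omega
            · -- o ≥ m; in fact o ≥ m+1
              have hom1 : m+1 ≤ o := by omega
              have hsplit2 : m*p + o = m*(p+1) + (o - m) := by omega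
              rw [hsplit2]
              constructor
              · rintro i3 hi3 hcon
                have h3 : m*i3 + 0 = m*(p+1) + (o-m) := by omega
                have := (blk (by omega) (by omega) h3).2
                omega
              · rintro i3 hi3 hcon
                have h3 : m*i3 + (a+1) = m*(p+1) + (o-m) := by omega
                have := (blk (by omega) (by omega) h3).1
                omega
          · -- wrap: j > k'+1-a
            have hwrap : m*p + (r+a+2) + j = n + (j - (k'+1-a)) := by omega
            rw [hwrap, Nat.add_mod_left, Nat.mod_eq_of_lt (by omega), hmem]
            push_neg
            have hz : m*0 = 0 := by ring
            constructor
            · rintro i3 hi3 hcon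
              have h3 : m*i3 + 0 = m*0 + (j - (k'+1-a)) := by omega
              have := (blk (by omega) (by omega) h3).2
              omega
            · rintro i3 hi3 hcon
              have h3 : m*i3 + (a+1) = m*0 + (j - (k'+1-a)) := by omega
              have := (blk (by omega) (by omega) h3).2
              omega
      · -- t = m*(i2+1), 1 ≤ i2+1 ≤ p+1
        have hsucc : m*(i2+1) = m*i2 + m := by ring
        have hle : m*(i2+1) ≤ m*(p+1) := Nat.mul_le_mul_left m hi
        refine ⟨m*i2 + (a+2), k'+1-a, by omega, ?_, ?_⟩
        · rw [Nat.mod_eq_of_lt (by omega)]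
          omega
        · intro j hj hne
          rcases Nat.lt_or_ge j (k'+1-a) with hjlt | hjgt
          · have hsplit : m*i2 + (a+2) + j = m*i2 + (a+2+j) := by omega
            rw [Nat.mod_eq_of_lt (by omega), hsplit, hmem]
            push_neg
            constructor
            · rintro i3 hi3 hcon
              have h3 : m*i3 + 0 = m*i2 + (a+2+j) := by omega
              have := (blk (by omega) (by omega) h3).2
              omega
            · rintro i3 hi3 hcon
              have h3 : m*i3 + (a+1) = m*i2 + (a+2+j) := by omega
              have := (blk (by omega) (by omega) h3).2
              omega
          · have hsplit : m*i2 + (a+2) + j = m*(i2+1) + (j - (k'+1-a)) := by omega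
            have hlt : m*i2 + (a+2) + j < n := by omega
            rw [Nat.mod_eq_of_lt hlt, hsplit, hmem]
            push_neg
            constructor
            · rintro i3 hi3 hcon
              have h3 : m*i3 + 0 = m*(i2+1) + (j - (k'+1-a)) := by omega
              have := (blk (by omega) (by omega) h3).2
              omega
            · rintro i3 hi3 hcon
              have h3 : m*i3 + (a+1) = m*(i2+1) + (j - (k'+1-a)) := by omega
              have := (blk (by omega) (by omega) h3).2
              omega
    · -- t = m*i + (a+1), i ≤ p
      have hle : m*(i+1) ≤ m*(p+1) := Nat.mul_le_mul_left m (by omega)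
      have hsucc : m*(i+1) = m*i + m := by ring
      refine ⟨m*i + 1, a, by omega, ?_, ?_⟩
      · rw [Nat.mod_eq_of_lt (by omega)]
        omega
      · intro j hj hne
        have hsplit : m*i + 1 + j = m*i + (1+j) := by omega
        rw [Nat.mod_eq_of_lt (by omega), hsplit, hmem]
        push_neg
        constructor
        · rintro i3 hi3 hcon
          have h3 : m*i3 + 0 = m*i + (1+j) := by omega
          have := (blk (by omega) (by omega) h3).2
          omega
        · rintro i3 hi3 hcon
          have h3 : m*i3 + (a+1) = m*i + (1+j) := by omega
          have := (blk (by omega) (by omega) h3).2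
          omega
lemma arithA (k' p r : ℕ) (hr : 2*r ≤ k'+2) :
    ((k'+2-1) * ((k'+3)*(p+1)+r) + (k'+2)) / (k'+2+1) + (2*p+2) = (k'+3)*(p+1)+r := by
  obtain ⟨R, hR⟩ : ∃ R, k'+2 = 2*r + R := ⟨k'+2-2*r, by omega⟩
  have h1 : (k'+2-1) = k'+1 := by omega
  rw [h1]
  have h2 : (k'+1) * ((k'+3)*(p+1)+r) + (k'+2) = (k'+2+1) * ((k'+1)*(p+1)+r) + R := by
    zify at hR ⊢
    linear_combination hR
  rw [h2, Nat.mul_add_div (by omega), Nat.div_eq_of_lt (by omega), Nat.add_zero]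
  have h3 : (k'+3)*(p+1) = (k'+1)*(p+1) + 2*(p+1) := by ring
  omega

lemma arithB (k' p r : ℕ) (hr : k'+3 ≤ 2*r) (hrm : r < k'+3) :
    ((k'+2-1) * ((k'+3)*(p+1)+r) + (k'+2)) / (k'+2+1) + (2*p+3) = (k'+3)*(p+1)+r := by
  obtain ⟨r', rfl⟩ : ∃ r', r = r'+1 := ⟨r-1, by omega⟩
  obtain ⟨R, hR⟩ : ∃ R, 2*k'+3 = 2*r' + R := ⟨2*k'+3-2*r', by omega⟩
  have h1 : (k'+2-1) = k'+1 := by omega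
  rw [h1]
  have h2 : (k'+1) * ((k'+3)*(p+1)+(r'+1)) + (k'+2) = (k'+2+1) * ((k'+1)*(p+1)+r') + R := by
    zify at hR ⊢
    linear_combination hR
  rw [h2, Nat.mul_add_div (by omega), Nat.div_eq_of_lt (by omega), Nat.add_zero]
  have h3 : (k'+3)*(p+1) = (k'+1)*(p+1) + 2*(p+1) := by ring
  omega

end CP

/-- For `2 ≤ k` and `n ≥ k+1`, the minimum cardinality of a maximal independent set of
`C_k(Γ_n)` equals `⌈(k-1)n/(k+1)⌉`. -/
theorem minMaxIndep_cycle (n k : ℕ) (hk : 2 ≤ k) (hn : k + 1 ≤ n) :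
    sInf {m : ℕ | ∃ A : Finset (ZMod n),
        (∀ e, CycleEdge n k e → ¬ e ⊆ A) ∧
        (∀ B : Finset (ZMod n), (∀ e, CycleEdge n k e → ¬ e ⊆ B) → A ⊆ B → B = A) ∧
        A.card = m} =
      ((k - 1) * n + k) / (k + 1) := by
  obtain ⟨k', rfl⟩ : ∃ k', k = k' + 2 := ⟨k - 2, by omega⟩
  obtain ⟨p, r, rfl, hrm⟩ : ∃ p r, n = (k'+3)*(p+1) + r ∧ r < k'+3 := by
    refine ⟨n/(k'+3) - 1, n % (k'+3), ?_, Nat.mod_lt _ (by omega)⟩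
    have hd := Nat.div_add_mod n (k'+3)
    have h1 : 1 ≤ n / (k'+3) := (Nat.one_le_div_iff (by omega)).mpr (by omega)
    have h2 : (k'+3) * (n/(k'+3) - 1 + 1) = (k'+3) * (n/(k'+3)) := by
      congr 1
      omega
    omega
  have hNge : (k'+3) * 1 ≤ (k'+3)*(p+1) := Nat.mul_le_mul_left _ (by omega)
  have hmain : ∃ A : Finset (ZMod ((k'+3)*(p+1)+r)),
      (∀ e, CycleEdge ((k'+3)*(p+1)+r) (k'+2) e → ¬ e ⊆ A) ∧
      (∀ B : Finset (ZMod ((k'+3)*(p+1)+r)),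
        (∀ e, CycleEdge ((k'+3)*(p+1)+r) (k'+2) e → ¬ e ⊆ B) → A ⊆ B → B = A) ∧
      A.card = ((k'+2-1) * ((k'+3)*(p+1)+r) + (k'+2)) / (k'+2+1) := by
    by_cases hc : 2*r ≤ k'+2
    · obtain ⟨S, hcard, hbnd, hind, hmax⟩ := CP.caseA k' p r hc
      obtain ⟨A, h1, h2, h3⟩ := CP.build (by omega) (by omega) S hbnd hind hmax
      refine ⟨A, h1, h2, ?_⟩
      have h4 := CP.arithA k' p r hc
      omega
    · obtain ⟨S, hcard, hbnd, hind, hmax⟩ := CP.caseB k' p r (by omega) hrm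
      obtain ⟨A, h1, h2, h3⟩ := CP.build (by omega) (by omega) S hbnd hind hmax
      refine ⟨A, h1, h2, ?_⟩
      have h4 := CP.arithB k' p r (by omega) hrm
      omega
  obtain ⟨A, hA1, hA2, hA3⟩ := hmain
  apply le_antisymm
  · exact Nat.sInf_le ⟨A, hA1, hA2, hA3⟩
  · refine le_csInf ⟨_, ⟨A, hA1, hA2, hA3⟩⟩ ?_
    rintro b ⟨A', h1, h2, rfl⟩
    exact CP.lower (by omega) (by omega) A' h1 h2
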